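/- Let R be an n×n real symmetric positive definite matrix, t ∈ ℝ, h ≥ 0, K : [0,∞) → ℝ a nonnegative function and ω : ℝ → ℝⁿ a function, such that K has finite moments K₀ := ∫_0^∞ K(s) ds, K₁ := ∫_0^∞ sK(s) ds, K₂ := ∫_0^∞ s²K(s) ds, K₃ := ∫_0^∞ s³K(s) ds, and all the iterated integrals below over the region {(θ,s) : θ ∈ [0,∞), s ∈ [t−θ−h, t]} are well defined and finite. Set K_{1h} := hK₀ + K₁ and assume K_{1h} > 0. Define K̃₁ := (h³/2)K₀ + 2K₃ + (3h²K₀(hK₁+2K₂) − 3K₂²)/(2K_{1h}) and assume K̃₁ > 0. Define Σ̃ := ∫_0^∞ ∫_{t−θ−h}^{t} K(θ)(−s + t − (hK_{1h}+hK₁+K₂)/(2K_{1h})) ω(s) ds dθ. Then ∫_0^∞ ∫_{t−θ−h}^{t} K(θ) ω(s)ᵀ R ω(s) ds dθ ≥ K_{1h}⁻¹ (∫_0^∞ ∫_{t−θ−h}^{t} K(θ)ω(s) ds dθ)ᵀ R (∫_0^∞ ∫_{t−θ−h}^{t} K(θ)ω(s) ds dθ) + K̃₁⁻¹ Σ̃ᵀ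 R Σ̃. -/

import Mathlib

open MeasureTheory Matrix

noncomputable def dotCLM {n : ℕ} (w : Fin n → ℝ) : (Fin n → ℝ) →L[ℝ] ℝ :=
  LinearMap.toContinuousLinearMap
    { toFun := fun x => x ⬝ᵥ w
      map_add' := fun x y => add_dotProduct x y w
      map_smul' := fun c x => smul_dotProduct c x w }

lemma integral_dot_right {n : ℕ} (w : Fin n → ℝ) (f : ℝ → (Fin n → ℝ)) (μ : Measure ℝ)
    (hf : Integrable f μ) : (∫ x, (f x) ⬝ᵥ w ∂μ) = (∫ x, f x ∂μ) ⬝ᵥ w := by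
  have := (dotCLM w).integral_comp_comm hf
  simpa [dotCLM] using this

lemma integrable_dot_right {n : ℕ} (w : Fin n → ℝ) (f : ℝ → (Fin n → ℝ)) (μ : Measure ℝ)
    (hf : Integrable f μ) : Integrable (fun x => (f x) ⬝ᵥ w) μ := by
  have := (dotCLM w).integrable_comp hf
  simpa [dotCLM] using this

lemma integral_poly2 (a b A B C : ℝ) : ∫ s in a..b, (A*s^2 + B*s + C) =
    A*(b^3-a^3)/3 + B*(b^2-a^2)/2 + C*(b-a) := by
  have h1 : IntervalIntegrable (fun s => A*s^2) volume a b :=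
    (by fun_prop : Continuous fun s:ℝ => A*s^2).intervalIntegrable a b
  have h2 : IntervalIntegrable (fun s => B*s) volume a b :=
    (by fun_prop : Continuous fun s:ℝ => B*s).intervalIntegrable a b
  have h3 : IntervalIntegrable (fun s : ℝ => C) volume a b :=
    (continuous_const).intervalIntegrable a b
  rw [intervalIntegral.integral_add (h1.add h2) h3, intervalIntegral.integral_add h1 h2,
    intervalIntegral.integral_const_mul, intervalIntegral.integral_const_mul,
    integral_pow, integral_id, intervalIntegral.integral_const]
  simp only [smul_eq_mul]
  push_cast
  ring

lemma integrableOn_polyK {K : ℝ → ℝ}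
    (hK : IntegrableOn K (Set.Ici (0:ℝ)))
    (hsK : IntegrableOn (fun s => s * K s) (Set.Ici (0:ℝ)))
    (hs2K : IntegrableOn (fun s => s ^ 2 * K s) (Set.Ici (0:ℝ)))
    (hs3K : IntegrableOn (fun s => s ^ 3 * K s) (Set.Ici (0:ℝ)))
    (a0 a1 a2 a3 : ℝ) :
    IntegrableOn
      (fun θ => a0 * K θ + a1 * (θ * K θ) + a2 * (θ ^ 2 * K θ) + a3 * (θ ^ 3 * K θ))
      (Set.Ici (0:ℝ)) :=
  (((hK.const_mul a0).add (hsK.const_mul a1)).add (hs2K.const_mul a2)).add (hs3K.const_mul a3)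

lemma integral_polyK {K : ℝ → ℝ}
    (hK : IntegrableOn K (Set.Ici (0:ℝ)))
    (hsK : IntegrableOn (fun s => s * K s) (Set.Ici (0:ℝ)))
    (hs2K : IntegrableOn (fun s => s ^ 2 * K s) (Set.Ici (0:ℝ)))
    (hs3K : IntegrableOn (fun s => s ^ 3 * K s) (Set.Ici (0:ℝ)))
    (a0 a1 a2 a3 : ℝ) :
    (∫ θ in Set.Ici (0:ℝ),
        (a0 * K θ + a1 * (θ * K θ) + a2 * (θ ^ 2 * K θ) + a3 * (θ ^ 3 * K θ)))
      = a0 * (∫ s in Set.Ici (0:ℝ), K s) + a1 * (∫ s in Set.Ici (0:ℝ), s * K s)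
        + a2 * (∫ s in Set.Ici (0:ℝ), s ^ 2 * K s)
        + a3 * (∫ s in Set.Ici (0:ℝ), s ^ 3 * K s) := by
  have i1 : IntegrableOn (fun θ : ℝ => a0 * K θ) (Set.Ici (0:ℝ)) := hK.const_mul a0
  have i2 : IntegrableOn (fun θ : ℝ => a1 * (θ * K θ)) (Set.Ici (0:ℝ)) := hsK.const_mul a1
  have i3 : IntegrableOn (fun θ : ℝ => a2 * (θ ^ 2 * K θ)) (Set.Ici (0:ℝ)) := hs2K.const_mul a2
  have i4 : IntegrableOn (fun θ : ℝ => a3 * (θ ^ 3 * K θ)) (Set.Ici (0:ℝ)) := hs3K.const_mul a3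
  have i12 : IntegrableOn (fun θ : ℝ => a0 * K θ + a1 * (θ * K θ)) (Set.Ici (0:ℝ)) := i1.add i2
  have i123 : IntegrableOn (fun θ : ℝ => a0 * K θ + a1 * (θ * K θ) + a2 * (θ ^ 2 * K θ))
      (Set.Ici (0:ℝ)) := i12.add i3
  rw [integral_add i123 i4, integral_add i12 i3, integral_add i1 i2,
    integral_const_mul, integral_const_mul, integral_const_mul, integral_const_mul]

set_option maxHeartbeats 1000000 in
/-- Corollary 2: double-integral Jensen inequality over an infinite horizon with
the explicit auxiliary function `g(s) = -s + t - (hK_{1h}+hK₁+K₂)/(2K_{1h})`. -/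
theorem extended_jensen_double_integral_moments {n : ℕ}
    (R : Matrix (Fin n) (Fin n) ℝ) (hRsym : R.IsSymm) (hRpd : R.PosDef)
    (t h : ℝ) (hh : 0 ≤ h)
    (K : ℝ → ℝ) (ω : ℝ → (Fin n → ℝ))
    (hKnonneg : ∀ θ ∈ Set.Ici (0 : ℝ), 0 ≤ K θ)
    -- finiteness of the moments of K
    (hK : IntegrableOn K (Set.Ici (0 : ℝ)))
    (hsK : IntegrableOn (fun s => s * K s) (Set.Ici (0 : ℝ)))
    (hs2K : IntegrableOn (fun s => s ^ 2 * K s) (Set.Ici (0 : ℝ)))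
    (hs3K : IntegrableOn (fun s => s ^ 3 * K s) (Set.Ici (0 : ℝ)))
    (K0 K1 K2 K3 : ℝ)
    (hK0 : K0 = ∫ s in Set.Ici (0 : ℝ), K s)
    (hK1 : K1 = ∫ s in Set.Ici (0 : ℝ), s * K s)
    (hK2 : K2 = ∫ s in Set.Ici (0 : ℝ), s ^ 2 * K s)
    (hK3 : K3 = ∫ s in Set.Ici (0 : ℝ), s ^ 3 * K s)
    (K1h : ℝ) (hK1h : K1h = h * K0 + K1) (hK1hpos : 0 < K1h)
    (Ktilde : ℝ)
    (hKtilde : Ktilde = (h ^ 3 / 2) * K0 + 2 * K3 +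
      (3 * h ^ 2 * K0 * (h * K1 + 2 * K2) - 3 * K2 ^ 2) / (2 * K1h))
    (hKtildepos : 0 < Ktilde)
    -- inner integrability on [t-θ-h, t] for every θ ≥ 0
    (hKω_in : ∀ θ ∈ Set.Ici (0 : ℝ),
      IntegrableOn (fun s => K θ • ω s) (Set.Icc (t - θ - h) t))
    (hKgω_in : ∀ θ ∈ Set.Ici (0 : ℝ),
      IntegrableOn
        (fun s => (K θ * (-s + t - (h * K1h + h * K1 + K2) / (2 * K1h))) • ω s)
        (Set.Icc (t - θ - h) t))
    (hKωRω_in : ∀ θ ∈ Set.Ici (0 : ℝ),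
      IntegrableOn (fun s => K θ * (ω s ⬝ᵥ R.mulVec (ω s))) (Set.Icc (t - θ - h) t))
    -- outer integrability on [0,∞)
    (hKω_out : IntegrableOn
      (fun θ => ∫ s in Set.Icc (t - θ - h) t, K θ • ω s) (Set.Ici (0 : ℝ)))
    (hKgω_out : IntegrableOn
      (fun θ => ∫ s in Set.Icc (t - θ - h) t,
        (K θ * (-s + t - (h * K1h + h * K1 + K2) / (2 * K1h))) • ω s)
      (Set.Ici (0 : ℝ)))
    (hKωRω_out : IntegrableOn
      (fun θ => ∫ s in Set.Icc (t - θ - h) t, K θ * (ω s ⬝ᵥ R.mulVec (ω s)))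
      (Set.Ici (0 : ℝ)))
    (Sig : Fin n → ℝ)
    (hSig : Sig = ∫ θ in Set.Ici (0 : ℝ), ∫ s in Set.Icc (t - θ - h) t,
      (K θ * (-s + t - (h * K1h + h * K1 + K2) / (2 * K1h))) • ω s) :
    ∫ θ in Set.Ici (0 : ℝ), ∫ s in Set.Icc (t - θ - h) t,
        K θ * (ω s ⬝ᵥ R.mulVec (ω s)) ≥
      K1h⁻¹ *
        ((∫ θ in Set.Ici (0 : ℝ), ∫ s in Set.Icc (t - θ - h) t, K θ • ω s) ⬝ᵥ
          R.mulVec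
            (∫ θ in Set.Ici (0 : ℝ), ∫ s in Set.Icc (t - θ - h) t, K θ • ω s)) +
      Ktilde⁻¹ * (Sig ⬝ᵥ R.mulVec Sig) := by
  have hK1h0 : K1h ≠ 0 := ne_of_gt hK1hpos
  have hKt0 : Ktilde ≠ 0 := ne_of_gt hKtildepos
  have hq : ∀ x : Fin n → ℝ, 0 ≤ x ⬝ᵥ R.mulVec x := fun x => by
    simpa using hRpd.posSemidef.dotProduct_mulVec_nonneg x
  have dsym : ∀ x y : Fin n → ℝ, x ⬝ᵥ R.mulVec y = y ⬝ᵥ R.mulVec x := fun x y => by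
    rw [dotProduct_mulVec, dotProduct_comm, ← mulVec_transpose, hRsym.eq]
  set c : ℝ := (h * K1h + h * K1 + K2) / (2 * K1h) with hc
  set v : Fin n → ℝ :=
    ∫ θ in Set.Ici (0 : ℝ), ∫ s in Set.Icc (t - θ - h) t, K θ • ω s with hv
  set α : Fin n → ℝ := K1h⁻¹ • v with hα
  set β : Fin n → ℝ := (6 * Ktilde⁻¹) • Sig with hβ
  clear_value c v α β
  -- pointwise expansion of the quadratic form
  have hpt : ∀ θ s : ℝ,
      K θ * ((ω s - α - (-s + t - c) • β) ⬝ᵥ R.mulVec (ω s - α - (-s + t - c) • β)) =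
        K θ * (ω s ⬝ᵥ R.mulVec (ω s))
        - 2 * ((K θ • ω s) ⬝ᵥ R.mulVec α)
        - 2 * (((K θ * (-s + t - c)) • ω s) ⬝ᵥ R.mulVec β)
        + K θ * (α ⬝ᵥ R.mulVec α)
        + (K θ * (-s + t - c)) * (2 * (α ⬝ᵥ R.mulVec β))
        + (K θ * (-s + t - c) ^ 2) * (β ⬝ᵥ R.mulVec β) := by
    intro θ s
    simp only [Matrix.mulVec_sub, Matrix.mulVec_smul, dotProduct_sub, sub_dotProduct,
      dotProduct_smul, smul_dotProduct, smul_eq_mul]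
    rw [dsym α (ω s), dsym β (ω s), dsym β α]
    ring
  -- inner integral expansion
  have hInner : ∀ θ ∈ Set.Ici (0 : ℝ),
      (∫ s in Set.Icc (t - θ - h) t,
          K θ * ((ω s - α - (-s + t - c) • β) ⬝ᵥ R.mulVec (ω s - α - (-s + t - c) • β))) =
        (∫ s in Set.Icc (t - θ - h) t, K θ * (ω s ⬝ᵥ R.mulVec (ω s)))
        - 2 * ((∫ s in Set.Icc (t - θ - h) t, K θ • ω s) ⬝ᵥ R.mulVec α)
        - 2 * ((∫ s in Set.Icc (t - θ - h) t, (K θ * (-s + t - c)) • ω s) ⬝ᵥ R.mulVec β)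
        + K θ * (θ + h) * (α ⬝ᵥ R.mulVec α)
        + K θ * ((θ + h) ^ 2 / 2 - c * (θ + h)) * (2 * (α ⬝ᵥ R.mulVec β))
        + K θ * ((θ + h) ^ 3 / 3 - c * (θ + h) ^ 2 + c ^ 2 * (θ + h)) * (β ⬝ᵥ R.mulVec β) := by
    intro θ hθ
    have hθ0 : (0:ℝ) ≤ θ := hθ
    have hle : t - θ - h ≤ t := by linarith
    have i1 := hKωRω_in θ hθ
    have i2 : IntegrableOn (fun s => 2 * ((K θ • ω s) ⬝ᵥ R.mulVec α))
        (Set.Icc (t - θ - h) t) :=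
      (integrable_dot_right (R.mulVec α) _ _ (hKω_in θ hθ)).const_mul 2
    have i3 : IntegrableOn
        (fun s => 2 * (((K θ * (-s + t - c)) • ω s) ⬝ᵥ R.mulVec β))
        (Set.Icc (t - θ - h) t) :=
      (integrable_dot_right (R.mulVec β) _ _ (hKgω_in θ hθ)).const_mul 2
    have i4 : IntegrableOn (fun _ : ℝ => K θ * (α ⬝ᵥ R.mulVec α))
        (Set.Icc (t - θ - h) t) :=
      integrableOn_const measure_Icc_lt_top.ne
    have i5 : IntegrableOn
        (fun s => (K θ * (-s + t - c)) * (2 * (α ⬝ᵥ R.mulVec β)))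
        (Set.Icc (t - θ - h) t) :=
      (by fun_prop :
        Continuous fun s : ℝ => (K θ * (-s + t - c)) * (2 * (α ⬝ᵥ R.mulVec β))).integrableOn_Icc
    have i6 : IntegrableOn
        (fun s => (K θ * (-s + t - c) ^ 2) * (β ⬝ᵥ R.mulVec β))
        (Set.Icc (t - θ - h) t) :=
      (by fun_prop :
        Continuous fun s : ℝ => (K θ * (-s + t - c) ^ 2) * (β ⬝ᵥ R.mulVec β)).integrableOn_Icc
    have e2 : (∫ s in Set.Icc (t - θ - h) t, 2 * ((K θ • ω s) ⬝ᵥ R.mulVec α)) =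
        2 * ((∫ s in Set.Icc (t - θ - h) t, K θ • ω s) ⬝ᵥ R.mulVec α) := by
      rw [integral_const_mul, integral_dot_right _ _ _ (hKω_in θ hθ)]
    have e3 : (∫ s in Set.Icc (t - θ - h) t,
          2 * (((K θ * (-s + t - c)) • ω s) ⬝ᵥ R.mulVec β)) =
        2 * ((∫ s in Set.Icc (t - θ - h) t, (K θ * (-s + t - c)) • ω s) ⬝ᵥ R.mulVec β) := by
      rw [integral_const_mul, integral_dot_right _ _ _ (hKgω_in θ hθ)]
    have e4 : (∫ _ in Set.Icc (t - θ - h) t, K θ * (α ⬝ᵥ R.mulVec α)) =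
        K θ * (θ + h) * (α ⬝ᵥ R.mulVec α) := by
      rw [setIntegral_const, Real.volume_real_Icc_of_le (by linarith), smul_eq_mul]
      ring
    have e5 : (∫ s in Set.Icc (t - θ - h) t,
          (K θ * (-s + t - c)) * (2 * (α ⬝ᵥ R.mulVec β))) =
        K θ * ((θ + h) ^ 2 / 2 - c * (θ + h)) * (2 * (α ⬝ᵥ R.mulVec β)) := by
      calc (∫ s in Set.Icc (t - θ - h) t, (K θ * (-s + t - c)) * (2 * (α ⬝ᵥ R.mulVec β)))
          = ∫ s in (t - θ - h)..t,
              (K θ * (2 * (α ⬝ᵥ R.mulVec β))) * (0 * s ^ 2 + (-1) * s + (t - c)) := by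
            rw [integral_Icc_eq_integral_Ioc, ← intervalIntegral.integral_of_le hle]
            exact intervalIntegral.integral_congr (fun s _ => by ring)
        _ = K θ * ((θ + h) ^ 2 / 2 - c * (θ + h)) * (2 * (α ⬝ᵥ R.mulVec β)) := by
            rw [intervalIntegral.integral_const_mul, integral_poly2]; ring
    have e6 : (∫ s in Set.Icc (t - θ - h) t,
          (K θ * (-s + t - c) ^ 2) * (β ⬝ᵥ R.mulVec β)) =
        K θ * ((θ + h) ^ 3 / 3 - c * (θ + h) ^ 2 + c ^ 2 * (θ + h)) * (β ⬝ᵥ R.mulVec β) := by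
      calc (∫ s in Set.Icc (t - θ - h) t, (K θ * (-s + t - c) ^ 2) * (β ⬝ᵥ R.mulVec β))
          = ∫ s in (t - θ - h)..t,
              (K θ * (β ⬝ᵥ R.mulVec β)) * (1 * s ^ 2 + (2 * (c - t)) * s + (t - c) ^ 2) := by
            rw [integral_Icc_eq_integral_Ioc, ← intervalIntegral.integral_of_le hle]
            exact intervalIntegral.integral_congr (fun s _ => by ring)
        _ = K θ * ((θ + h) ^ 3 / 3 - c * (θ + h) ^ 2 + c ^ 2 * (θ + h)) * (β ⬝ᵥ R.mulVec β) := by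
            rw [intervalIntegral.integral_const_mul, integral_poly2]; ring
    have i12 : IntegrableOn (fun s =>
        K θ * (ω s ⬝ᵥ R.mulVec (ω s)) - 2 * ((K θ • ω s) ⬝ᵥ R.mulVec α))
        (Set.Icc (t - θ - h) t) := i1.sub i2
    have i123 : IntegrableOn (fun s =>
        K θ * (ω s ⬝ᵥ R.mulVec (ω s)) - 2 * ((K θ • ω s) ⬝ᵥ R.mulVec α)
          - 2 * (((K θ * (-s + t - c)) • ω s) ⬝ᵥ R.mulVec β))
        (Set.Icc (t - θ - h) t) := i12.sub i3
    have i1234 : IntegrableOn (fun s =>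
        K θ * (ω s ⬝ᵥ R.mulVec (ω s)) - 2 * ((K θ • ω s) ⬝ᵥ R.mulVec α)
          - 2 * (((K θ * (-s + t - c)) • ω s) ⬝ᵥ R.mulVec β)
          + K θ * (α ⬝ᵥ R.mulVec α))
        (Set.Icc (t - θ - h) t) := i123.add i4
    have i12345 : IntegrableOn (fun s =>
        K θ * (ω s ⬝ᵥ R.mulVec (ω s)) - 2 * ((K θ • ω s) ⬝ᵥ R.mulVec α)
          - 2 * (((K θ * (-s + t - c)) • ω s) ⬝ᵥ R.mulVec β)
          + K θ * (α ⬝ᵥ R.mulVec α)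
          + (K θ * (-s + t - c)) * (2 * (α ⬝ᵥ R.mulVec β)))
        (Set.Icc (t - θ - h) t) := i1234.add i5
    rw [setIntegral_congr_fun measurableSet_Icc (fun s _ => hpt θ s),
      integral_add i12345 i6, integral_add i1234 i5, integral_add i123 i4,
      integral_sub i12 i3, integral_sub i1 i2, e2, e3, e4, e5, e6]
  -- nonnegativity of the double integral of the quadratic form
  have hnn : 0 ≤ ∫ θ in Set.Ici (0:ℝ), ∫ s in Set.Icc (t - θ - h) t,
      K θ * ((ω s - α - (-s + t - c) • β) ⬝ᵥ R.mulVec (ω s - α - (-s + t - c) • β)) := by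
    apply setIntegral_nonneg measurableSet_Ici
    intro θ hθ
    apply setIntegral_nonneg measurableSet_Icc
    intro s _
    exact mul_nonneg (hKnonneg θ hθ) (hq _)
  -- outer integrability
  have o1 := hKωRω_out
  have o2 : IntegrableOn (fun θ =>
      2 * ((∫ s in Set.Icc (t - θ - h) t, K θ • ω s) ⬝ᵥ R.mulVec α)) (Set.Ici (0:ℝ)) :=
    (integrable_dot_right (R.mulVec α) _ _ hKω_out).const_mul 2
  have o3 : IntegrableOn (fun θ =>
      2 * ((∫ s in Set.Icc (t - θ - h) t,
        (K θ * (-s + t - c)) • ω s) ⬝ᵥ R.mulVec β)) (Set.Ici (0:ℝ)) :=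
    (integrable_dot_right (R.mulVec β) _ _ hKgω_out).const_mul 2
  have o4 : IntegrableOn (fun θ => K θ * (θ + h) * (α ⬝ᵥ R.mulVec α)) (Set.Ici (0:ℝ)) := by
    have e : (fun θ : ℝ => K θ * (θ + h) * (α ⬝ᵥ R.mulVec α)) =
        fun θ : ℝ => (h * (α ⬝ᵥ R.mulVec α)) * K θ + (α ⬝ᵥ R.mulVec α) * (θ * K θ)
          + 0 * (θ ^ 2 * K θ) + 0 * (θ ^ 3 * K θ) := funext fun θ => by ring
    rw [e]; exact integrableOn_polyK hK hsK hs2K hs3K _ _ _ _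
  have o5 : IntegrableOn (fun θ =>
      K θ * ((θ + h) ^ 2 / 2 - c * (θ + h)) * (2 * (α ⬝ᵥ R.mulVec β))) (Set.Ici (0:ℝ)) := by
    have e : (fun θ : ℝ => K θ * ((θ + h) ^ 2 / 2 - c * (θ + h)) * (2 * (α ⬝ᵥ R.mulVec β))) =
        fun θ : ℝ => ((h ^ 2 / 2 - c * h) * (2 * (α ⬝ᵥ R.mulVec β))) * K θ
          + ((h - c) * (2 * (α ⬝ᵥ R.mulVec β))) * (θ * K θ)
          + ((1 / 2) * (2 * (α ⬝ᵥ R.mulVec β))) * (θ ^ 2 * K θ)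
          + 0 * (θ ^ 3 * K θ) := funext fun θ => by ring
    rw [e]; exact integrableOn_polyK hK hsK hs2K hs3K _ _ _ _
  have o6 : IntegrableOn (fun θ =>
      K θ * ((θ + h) ^ 3 / 3 - c * (θ + h) ^ 2 + c ^ 2 * (θ + h)) * (β ⬝ᵥ R.mulVec β))
      (Set.Ici (0:ℝ)) := by
    have e : (fun θ : ℝ =>
        K θ * ((θ + h) ^ 3 / 3 - c * (θ + h) ^ 2 + c ^ 2 * (θ + h)) * (β ⬝ᵥ R.mulVec β)) =
        fun θ : ℝ => ((h ^ 3 / 3 - c * h ^ 2 + c ^ 2 * h) * (β ⬝ᵥ R.mulVec β)) * K θ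
          + ((h ^ 2 - 2 * c * h + c ^ 2) * (β ⬝ᵥ R.mulVec β)) * (θ * K θ)
          + ((h - c) * (β ⬝ᵥ R.mulVec β)) * (θ ^ 2 * K θ)
          + ((1 / 3) * (β ⬝ᵥ R.mulVec β)) * (θ ^ 3 * K θ) := funext fun θ => by ring
    rw [e]; exact integrableOn_polyK hK hsK hs2K hs3K _ _ _ _
  -- outer integral values
  have O2 : (∫ θ in Set.Ici (0:ℝ),
      2 * ((∫ s in Set.Icc (t - θ - h) t, K θ • ω s) ⬝ᵥ R.mulVec α)) =
      2 * (v ⬝ᵥ R.mulVec α) := by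
    rw [integral_const_mul, integral_dot_right _ _ _ hKω_out, ← hv]
  have O3 : (∫ θ in Set.Ici (0:ℝ),
      2 * ((∫ s in Set.Icc (t - θ - h) t, (K θ * (-s + t - c)) • ω s) ⬝ᵥ R.mulVec β)) =
      2 * (Sig ⬝ᵥ R.mulVec β) := by
    rw [integral_const_mul, integral_dot_right _ _ _ hKgω_out, ← hSig]
  have O4 : (∫ θ in Set.Ici (0:ℝ), K θ * (θ + h) * (α ⬝ᵥ R.mulVec α)) =
      (h * K0 + K1) * (α ⬝ᵥ R.mulVec α) := by
    calc (∫ θ in Set.Ici (0:ℝ), K θ * (θ + h) * (α ⬝ᵥ R.mulVec α))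
        = ∫ θ in Set.Ici (0:ℝ), ((h * (α ⬝ᵥ R.mulVec α)) * K θ
            + (α ⬝ᵥ R.mulVec α) * (θ * K θ) + 0 * (θ ^ 2 * K θ) + 0 * (θ ^ 3 * K θ)) :=
          setIntegral_congr_fun measurableSet_Ici (fun θ _ => by ring)
      _ = _ := integral_polyK hK hsK hs2K hs3K _ _ _ _
      _ = (h * K0 + K1) * (α ⬝ᵥ R.mulVec α) := by rw [← hK0, ← hK1, ← hK2, ← hK3]; ring
  have O5 : (∫ θ in Set.Ici (0:ℝ),
      K θ * ((θ + h) ^ 2 / 2 - c * (θ + h)) * (2 * (α ⬝ᵥ R.mulVec β))) =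
      ((h ^ 2 / 2 - c * h) * K0 + (h - c) * K1 + (1 / 2) * K2) * (2 * (α ⬝ᵥ R.mulVec β)) := by
    calc (∫ θ in Set.Ici (0:ℝ),
        K θ * ((θ + h) ^ 2 / 2 - c * (θ + h)) * (2 * (α ⬝ᵥ R.mulVec β)))
        = ∫ θ in Set.Ici (0:ℝ), (((h ^ 2 / 2 - c * h) * (2 * (α ⬝ᵥ R.mulVec β))) * K θ
            + ((h - c) * (2 * (α ⬝ᵥ R.mulVec β))) * (θ * K θ)
            + ((1 / 2) * (2 * (α ⬝ᵥ R.mulVec β))) * (θ ^ 2 * K θ)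
            + 0 * (θ ^ 3 * K θ)) :=
          setIntegral_congr_fun measurableSet_Ici (fun θ _ => by ring)
      _ = _ := integral_polyK hK hsK hs2K hs3K _ _ _ _
      _ = _ := by rw [← hK0, ← hK1, ← hK2, ← hK3]; ring
  have O6 : (∫ θ in Set.Ici (0:ℝ),
      K θ * ((θ + h) ^ 3 / 3 - c * (θ + h) ^ 2 + c ^ 2 * (θ + h)) * (β ⬝ᵥ R.mulVec β)) =
      ((h ^ 3 / 3 - c * h ^ 2 + c ^ 2 * h) * K0 + (h ^ 2 - 2 * c * h + c ^ 2) * K1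
        + (h - c) * K2 + (1 / 3) * K3) * (β ⬝ᵥ R.mulVec β) := by
    calc (∫ θ in Set.Ici (0:ℝ),
        K θ * ((θ + h) ^ 3 / 3 - c * (θ + h) ^ 2 + c ^ 2 * (θ + h)) * (β ⬝ᵥ R.mulVec β))
        = ∫ θ in Set.Ici (0:ℝ),
            (((h ^ 3 / 3 - c * h ^ 2 + c ^ 2 * h) * (β ⬝ᵥ R.mulVec β)) * K θ
            + ((h ^ 2 - 2 * c * h + c ^ 2) * (β ⬝ᵥ R.mulVec β)) * (θ * K θ)
            + ((h - c) * (β ⬝ᵥ R.mulVec β)) * (θ ^ 2 * K θ)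
            + ((1 / 3) * (β ⬝ᵥ R.mulVec β)) * (θ ^ 3 * K θ)) :=
          setIntegral_congr_fun measurableSet_Ici (fun θ _ => by ring)
      _ = _ := integral_polyK hK hsK hs2K hs3K _ _ _ _
      _ = _ := by rw [← hK0, ← hK1, ← hK2, ← hK3]; ring
  -- outer integrability of partial sums
  have o12 : IntegrableOn (fun θ =>
      (∫ s in Set.Icc (t - θ - h) t, K θ * (ω s ⬝ᵥ R.mulVec (ω s)))
      - 2 * ((∫ s in Set.Icc (t - θ - h) t, K θ • ω s) ⬝ᵥ R.mulVec α)) (Set.Ici (0:ℝ)) :=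
    o1.sub o2
  have o123 : IntegrableOn (fun θ =>
      (∫ s in Set.Icc (t - θ - h) t, K θ * (ω s ⬝ᵥ R.mulVec (ω s)))
      - 2 * ((∫ s in Set.Icc (t - θ - h) t, K θ • ω s) ⬝ᵥ R.mulVec α)
      - 2 * ((∫ s in Set.Icc (t - θ - h) t, (K θ * (-s + t - c)) • ω s) ⬝ᵥ R.mulVec β))
      (Set.Ici (0:ℝ)) := o12.sub o3
  have o1234 : IntegrableOn (fun θ =>
      (∫ s in Set.Icc (t - θ - h) t, K θ * (ω s ⬝ᵥ R.mulVec (ω s)))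
      - 2 * ((∫ s in Set.Icc (t - θ - h) t, K θ • ω s) ⬝ᵥ R.mulVec α)
      - 2 * ((∫ s in Set.Icc (t - θ - h) t, (K θ * (-s + t - c)) • ω s) ⬝ᵥ R.mulVec β)
      + K θ * (θ + h) * (α ⬝ᵥ R.mulVec α)) (Set.Ici (0:ℝ)) := o123.add o4
  have o12345 : IntegrableOn (fun θ =>
      (∫ s in Set.Icc (t - θ - h) t, K θ * (ω s ⬝ᵥ R.mulVec (ω s)))
      - 2 * ((∫ s in Set.Icc (t - θ - h) t, K θ • ω s) ⬝ᵥ R.mulVec α)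
      - 2 * ((∫ s in Set.Icc (t - θ - h) t, (K θ * (-s + t - c)) • ω s) ⬝ᵥ R.mulVec β)
      + K θ * (θ + h) * (α ⬝ᵥ R.mulVec α)
      + K θ * ((θ + h) ^ 2 / 2 - c * (θ + h)) * (2 * (α ⬝ᵥ R.mulVec β)))
      (Set.Ici (0:ℝ)) := o1234.add o5
  -- total expansion
  have hTotal : (∫ θ in Set.Ici (0:ℝ), ∫ s in Set.Icc (t - θ - h) t,
      K θ * ((ω s - α - (-s + t - c) • β) ⬝ᵥ R.mulVec (ω s - α - (-s + t - c) • β))) =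
      (∫ θ in Set.Ici (0:ℝ), ∫ s in Set.Icc (t - θ - h) t, K θ * (ω s ⬝ᵥ R.mulVec (ω s)))
      - 2 * (v ⬝ᵥ R.mulVec α) - 2 * (Sig ⬝ᵥ R.mulVec β)
      + (h * K0 + K1) * (α ⬝ᵥ R.mulVec α)
      + ((h ^ 2 / 2 - c * h) * K0 + (h - c) * K1 + (1 / 2) * K2) * (2 * (α ⬝ᵥ R.mulVec β))
      + ((h ^ 3 / 3 - c * h ^ 2 + c ^ 2 * h) * K0 + (h ^ 2 - 2 * c * h + c ^ 2) * K1
        + (h - c) * K2 + (1 / 3) * K3) * (β ⬝ᵥ R.mulVec β) := by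
    rw [setIntegral_congr_fun measurableSet_Ici (fun θ hθ => hInner θ hθ),
      integral_add o12345 o6, integral_add o1234 o5, integral_add o123 o4,
      integral_sub o12 o3, integral_sub o1 o2, O2, O3, O4, O5, O6]
  -- algebraic identities
  have hne : h * K0 + K1 ≠ 0 := by rw [← hK1h]; exact hK1h0
  have f_vα : v ⬝ᵥ R.mulVec α = K1h⁻¹ * (v ⬝ᵥ R.mulVec v) := by
    rw [hα]; simp only [Matrix.mulVec_smul, dotProduct_smul, smul_eq_mul]
  have f_Sβ : Sig ⬝ᵥ R.mulVec β = 6 * Ktilde⁻¹ * (Sig ⬝ᵥ R.mulVec Sig) := by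
    rw [hβ]; simp only [Matrix.mulVec_smul, dotProduct_smul, smul_eq_mul]
    try ring
  have g1 : (h * K0 + K1) * (α ⬝ᵥ R.mulVec α) = K1h⁻¹ * (v ⬝ᵥ R.mulVec v) := by
    rw [← hK1h, hα]
    simp only [Matrix.mulVec_smul, dotProduct_smul, smul_dotProduct, smul_eq_mul]
    field_simp
    try ring
  have g2 : ((h ^ 2 / 2 - c * h) * K0 + (h - c) * K1 + (1 / 2) * K2)
      * (2 * (α ⬝ᵥ R.mulVec β)) = 0 := by
    have hz : (h ^ 2 / 2 - c * h) * K0 + (h - c) * K1 + (1 / 2) * K2 = 0 := by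
      rw [hc, hK1h]; field_simp; ring
    rw [hz, zero_mul]
  have g3a : (h ^ 3 / 3 - c * h ^ 2 + c ^ 2 * h) * K0 + (h ^ 2 - 2 * c * h + c ^ 2) * K1
      + (h - c) * K2 + (1 / 3) * K3 = Ktilde / 6 := by
    rw [hKtilde, hc, hK1h]; field_simp; ring
  have g3 : ((h ^ 3 / 3 - c * h ^ 2 + c ^ 2 * h) * K0 + (h ^ 2 - 2 * c * h + c ^ 2) * K1
      + (h - c) * K2 + (1 / 3) * K3) * (β ⬝ᵥ R.mulVec β)
      = 6 * Ktilde⁻¹ * (Sig ⬝ᵥ R.mulVec Sig) := by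
    rw [g3a, hβ]
    simp only [Matrix.mulVec_smul, dotProduct_smul, smul_dotProduct, smul_eq_mul]
    field_simp
  have hY : 0 ≤ Ktilde⁻¹ * (Sig ⬝ᵥ R.mulVec Sig) :=
    mul_nonneg (inv_nonneg.mpr hKtildepos.le) (hq Sig)
  linarith [hnn, hTotal, f_vα, f_Sβ, g1, g2, g3, hY]
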